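/- arXiv:2307.13582 — 5 statements merged into one kernel-verified Lean document; each statement's English description precedes it below -/
import Mathlib

section
/- Direct qualitative attribution influence (attack case): if argument B directly attacks topic argument A in an acyclic QBAF under DF-QuAD semantics, then the argument attribution explanation ∇|_{B→A} = lim_{ε→0} (σ_ε(A) − σ(A))/ε, obtained by perturbing τ(B) to τ(B)+ε, is less than or equal to 0. -/
open scoped BigOperators
attribute [local instance] Classical.propDecidable

/-- The DF-QuAD combination function: given base score `t`, aggregated attacker
strength `va` and aggregated supporter strength `vs`, return the strength. -/
noncomputable def dfquad (t va vs : ℝ) : ℝ :=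
  if vs ≤ va then t - t * (va - vs) else t + (1 - t) * (vs - va)

/-- A (finite, acyclic) quantitative bipolar argumentation framework. -/
structure QBAF (V : Type) [Fintype V] where
  att : V → V → Prop
  sup : V → V → Prop
  disjoint : ∀ x y, ¬ (att x y ∧ sup x y)
  acyclic : WellFounded (fun x y => att x y ∨ sup x y)

namespace QBAF

variable {V : Type} [Fintype V]

/-- Aggregated attacker strength `v_Aa = 1 - ∏ (1 - σ X)` over attackers `X` of `A`. -/
noncomputable def vatt (Q : QBAF V) (σ : V → ℝ) (A : V) : ℝ :=
  1 - ∏ x ∈ Finset.univ.filter (fun x => Q.att x A), (1 - σ x)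

/-- Aggregated supporter strength `v_As = 1 - ∏ (1 - σ X)` over supporters `X` of `A`. -/
noncomputable def vsup (Q : QBAF V) (σ : V → ℝ) (A : V) : ℝ :=
  1 - ∏ x ∈ Finset.univ.filter (fun x => Q.sup x A), (1 - σ x)

/-- `σ` is the DF-QuAD strength function for base scores `τ`. -/
def IsStrength (Q : QBAF V) (τ σ : V → ℝ) : Prop :=
  ∀ A, σ A = dfquad (τ A) (Q.vatt σ A) (Q.vsup σ A)

/-- The edge relation of the QBAF graph. -/
def edge (Q : QBAF V) (x y : V) : Prop := Q.att x y ∨ Q.sup x y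

/-- `l` is a (directed) path from `B` to `A` in the QBAF graph. -/
def IsPathFrom (Q : QBAF V) (B A : V) (l : List V) : Prop :=
  2 ≤ l.length ∧ l.Chain' Q.edge ∧ l.head? = some B ∧ l.getLast? = some A

end QBAF

/-- The argument attribution explanation (AAE) `∇|_{B ↦ A}`: the derivative of the
strength of `A` with respect to the base score of `B`, where `σf τ'` denotes the
DF-QuAD strength function for base scores `τ'`. -/
noncomputable def AAE {V : Type} [Fintype V] (Q : QBAF V)
    (σf : (V → ℝ) → V → ℝ) (τ : V → ℝ) (B A : V) : ℝ :=
  deriv (fun δ => σf (Function.update τ B δ) A) (τ B)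

namespace AAEAux

open QBAF Filter

/-- An antitone real function has nonpositive derivative everywhere. -/
lemma antitone_deriv_nonpos {f : ℝ → ℝ} (hf : Antitone f) (x : ℝ) : deriv f x ≤ 0 := by
  by_cases h : DifferentiableAt ℝ f x
  · have hs := hasDerivAt_iff_tendsto_slope.mp h.hasDerivAt
    have h2 : Tendsto (slope f x) (nhdsWithin x (Set.Ioi x)) (nhds (deriv f x)) :=
      hs.mono_left (nhdsWithin_mono x (fun y hy => ne_of_gt hy))
    refine le_of_tendsto h2 ?_
    filter_upwards [self_mem_nhdsWithin] with y hy
    rw [slope_def_field]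
    have h1 : f y ≤ f x := hf (le_of_lt hy)
    have h3 : (0:ℝ) < y - x := by simp only [Set.mem_Ioi] at hy; linarith
    exact div_nonpos_of_nonpos_of_nonneg (by linarith) (by linarith)
  · simp [deriv_zero_of_not_differentiableAt h]

lemma wf_irrefl {α : Type*} {r : α → α → Prop} (wf : WellFounded r) (a : α) : ¬ r a a :=
  wf.induction (C := fun a => ¬ r a a) a (fun x ih hx => ih x hx hx)

variable {V : Type} [Fintype V] (Q : QBAF V)

lemma edge_wf : WellFounded Q.edge := Q.acyclic

lemma path_two {x y : V} (h : Q.edge x y) : Q.IsPathFrom x y [x, y] :=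
  ⟨by simp, by simp [List.Chain', h], rfl, rfl⟩

lemma path_concat {B y z : V} {l : List V} (h : Q.IsPathFrom B y l) (he : Q.edge y z) :
    Q.IsPathFrom B z (l ++ [z]) := by
  obtain ⟨hlen, hch, hhd, hlast⟩ := h
  refine ⟨by simp; omega, ?_, ?_, List.getLast?_concat (l := l)⟩
  · unfold List.Chain'; rw [List.isChain_append]
    refine ⟨hch, List.isChain_singleton z, ?_⟩
    intro a ha b hb
    simp [hlast] at ha
    simp at hb
    subst ha; subst hb; exact he
  · cases l with
    | nil => simp at hhd
    | cons a t => simpa using hhd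

lemma chain_getLast_transGen : ∀ (rest : List V) (x y : V), rest ≠ [] →
    List.Chain Q.edge x rest → rest.getLast? = some y → Relation.TransGen Q.edge x y := by
  intro rest
  induction rest with
  | nil => intro x y h; exact absurd rfl h
  | cons b t ih =>
    intro x y _ hch hlast
    unfold List.Chain at hch; rw [List.isChain_cons_cons] at hch
    cases t with
    | nil => simp at hlast; subst hlast; exact Relation.TransGen.single hch.1
    | cons c t' =>
      exact Relation.TransGen.head hch.1 (ih b y (by simp) hch.2 (by simpa using hlast))

lemma path_transGen {B y : V} {l : List V} (h : Q.IsPathFrom B y l) :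
    Relation.TransGen Q.edge B y := by
  obtain ⟨hlen, hch, hhd, hlast⟩ := h
  cases l with
  | nil => simp at hhd
  | cons a rest =>
    simp at hhd; subst hhd
    cases rest with
    | nil => simp at hlen
    | cons b t =>
      exact chain_getLast_transGen Q (b::t) a y (by simp) hch (by simpa using hlast)

lemma dfquad_mem {t va vs : ℝ} (ht : t ∈ Set.Icc (0:ℝ) 1) (hva : va ∈ Set.Icc (0:ℝ) 1)
    (hvs : vs ∈ Set.Icc (0:ℝ) 1) : dfquad t va vs ∈ Set.Icc (0:ℝ) 1 := by
  obtain ⟨ht0, ht1⟩ := ht; obtain ⟨h1, h2⟩ := hva; obtain ⟨h3, h4⟩ := hvs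
  unfold dfquad
  split <;> constructor <;> nlinarith

lemma dfquad_mono_t {va vs : ℝ} (hva : va ∈ Set.Icc (0:ℝ) 1) (hvs : vs ∈ Set.Icc (0:ℝ) 1) :
    Monotone (fun t => dfquad t va vs) := by
  obtain ⟨h1, h2⟩ := hva; obtain ⟨h3, h4⟩ := hvs
  intro a b hab
  simp only [dfquad]
  split <;> nlinarith

lemma dfquad_anti_va {t vs : ℝ} (ht0 : 0 ≤ t) (ht1 : t ≤ 1) :
    Antitone (fun va => dfquad t va vs) := by
  intro a b hab
  simp only [dfquad]
  split_ifs with h1 h2 h2 <;> nlinarith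

lemma prod_one_sub_mem {s : Finset V} {σ : V → ℝ} (h : ∀ y ∈ s, σ y ∈ Set.Icc (0:ℝ) 1) :
    (∏ y ∈ s, (1 - σ y)) ∈ Set.Icc (0:ℝ) 1 :=
  ⟨Finset.prod_nonneg (fun y hy => by linarith [(h y hy).2]),
   Finset.prod_le_one (fun y hy => by linarith [(h y hy).2])
     (fun y hy => by linarith [(h y hy).1])⟩

lemma vatt_mem {σ : V → ℝ} (A : V) (h : ∀ x, σ x ∈ Set.Icc (0:ℝ) 1) :
    Q.vatt σ A ∈ Set.Icc (0:ℝ) 1 := by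
  have := prod_one_sub_mem (s := Finset.univ.filter (fun x => Q.att x A)) (σ := σ)
    (fun y _ => h y)
  unfold QBAF.vatt
  exact ⟨by linarith [this.2], by linarith [this.1]⟩

lemma vsup_mem {σ : V → ℝ} (A : V) (h : ∀ x, σ x ∈ Set.Icc (0:ℝ) 1) :
    Q.vsup σ A ∈ Set.Icc (0:ℝ) 1 := by
  have := prod_one_sub_mem (s := Finset.univ.filter (fun x => Q.sup x A)) (σ := σ)
    (fun y _ => h y)
  unfold QBAF.vsup
  exact ⟨by linarith [this.2], by linarith [this.1]⟩

lemma strength_mem {τ σ : V → ℝ} (hσ : Q.IsStrength τ σ)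
    (hτ : ∀ x, τ x ∈ Set.Icc (0:ℝ) 1) : ∀ x, σ x ∈ Set.Icc (0:ℝ) 1 := by
  intro x
  induction x using Q.acyclic.induction with
  | _ x ih =>
    rw [hσ x]
    refine dfquad_mem (hτ x) ?_ ?_
    · unfold QBAF.vatt
      have := prod_one_sub_mem (s := Finset.univ.filter (fun y => Q.att y x)) (σ := σ)
        (fun y hy => ih y (Or.inl (by simpa using hy)))
      exact ⟨by linarith [this.2], by linarith [this.1]⟩
    · unfold QBAF.vsup
      have := prod_one_sub_mem (s := Finset.univ.filter (fun y => Q.sup y x)) (σ := σ)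
        (fun y hy => ih y (Or.inr (by simpa using hy)))
      exact ⟨by linarith [this.2], by linarith [this.1]⟩

end AAEAux

open AAEAux in
/-- direct qualitative attribution influence, attack case.
If `B` directly attacks the topic argument `A` (the edge `(B,A) ∈ ℛ⁻` being the
unique path from `B` to `A`), then `∇|_{B ↦ A} ≤ 0`. -/
theorem direct_qualitative_attack {V : Type} [Fintype V] (Q : QBAF V)
    (σf : (V → ℝ) → V → ℝ) (hσ : ∀ τ, Q.IsStrength τ (σf τ))
    (τ : V → ℝ) (hτ : ∀ x, τ x ∈ Set.Icc (0:ℝ) 1)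
    (A B : V) (hatt : Q.att B A)
    (huniq : ∀ l, Q.IsPathFrom B A l → l = [B, A]) :
    AAE Q σf τ B A ≤ 0 := by
  classical
  have hmem : ∀ x, σf τ x ∈ Set.Icc (0:ℝ) 1 := strength_mem Q (hσ τ) hτ
  have hBA : Q.edge B A := Or.inl hatt
  have hAB : A ≠ B := by
    rintro rfl
    exact wf_irrefl (edge_wf Q) A hBA
  set va := Q.vatt (σf τ) B with hva_def
  set vs := Q.vsup (σf τ) B with hvs_def
  set vsA := Q.vsup (σf τ) A with hvsA_def
  set c := ∏ x ∈ (Finset.univ.filter (fun x => Q.att x A)).erase B, (1 - σf τ x) with hc_def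
  -- perturbing τ B does not change the strength of arguments not reachable from B
  have agree : ∀ x, x ≠ B → (∀ l, ¬ Q.IsPathFrom B x l) → ∀ δ,
      σf (Function.update τ B δ) x = σf τ x := by
    intro x
    induction x using Q.acyclic.induction with
    | _ x ih =>
      intro hxB hnp δ
      rw [hσ (Function.update τ B δ) x, hσ τ x]
      have hτx : Function.update τ B δ x = τ x := Function.update_of_ne hxB δ τ
      have key : ∀ y, Q.edge y x → σf (Function.update τ B δ) y = σf τ y := by
        intro y hedge
        have hyB : y ≠ B := by
          intro h
          exact hnp _ (path_two Q (h ▸ hedge))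
        have hnpy : ∀ l, ¬ Q.IsPathFrom B y l := fun l hl =>
          hnp _ (path_concat Q hl hedge)
        exact ih y hedge hyB hnpy δ
      have hprodA : Q.vatt (σf (Function.update τ B δ)) x = Q.vatt (σf τ) x := by
        unfold QBAF.vatt; congr 1
        refine Finset.prod_congr rfl (fun y hy => ?_)
        simp only [Finset.mem_filter, Finset.mem_univ, true_and] at hy
        rw [key y (Or.inl hy)]
      have hprodS : Q.vsup (σf (Function.update τ B δ)) x = Q.vsup (σf τ) x := by
        unfold QBAF.vsup; congr 1
        refine Finset.prod_congr rfl (fun y hy => ?_)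
        simp only [Finset.mem_filter, Finset.mem_univ, true_and] at hy
        rw [key y (Or.inr hy)]
      rw [hτx, hprodA, hprodS]
  -- immediate predecessors of B are unreachable from B
  have hB_pred : ∀ y, Q.edge y B → y ≠ B ∧ ∀ l, ¬ Q.IsPathFrom B y l := by
    intro y he
    constructor
    · intro h
      exact wf_irrefl (edge_wf Q) B (h ▸ he)
    · intro l hl
      exact wf_irrefl (edge_wf Q).transGen B ((path_transGen Q hl).tail he)
  -- strength of B under perturbation
  have hσ'B : ∀ δ, σf (Function.update τ B δ) B = dfquad δ va vs := by
    intro δ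
    rw [hσ _ B]
    have h1 : Q.vatt (σf (Function.update τ B δ)) B = va := by
      rw [hva_def]; unfold QBAF.vatt; congr 1
      refine Finset.prod_congr rfl (fun y hy => ?_)
      simp only [Finset.mem_filter, Finset.mem_univ, true_and] at hy
      obtain ⟨hyB, hnp⟩ := hB_pred y (Or.inl hy)
      rw [agree y hyB hnp δ]
    have h2 : Q.vsup (σf (Function.update τ B δ)) B = vs := by
      rw [hvs_def]; unfold QBAF.vsup; congr 1
      refine Finset.prod_congr rfl (fun y hy => ?_)
      simp only [Finset.mem_filter, Finset.mem_univ, true_and] at hy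
      obtain ⟨hyB, hnp⟩ := hB_pred y (Or.inr hy)
      rw [agree y hyB hnp δ]
    rw [Function.update_self, h1, h2]
  -- other predecessors of A are unreachable from B
  have hA_other : ∀ y, Q.edge y A → ∀ l, ¬ Q.IsPathFrom B y l := by
    intro y he l hl
    have hpath : Q.IsPathFrom B A (l ++ [A]) := path_concat Q hl he
    have heq := huniq _ hpath
    have hlen : l.length + 1 = 2 := by simpa using congrArg List.length heq
    have h2 : 2 ≤ l.length := hl.1
    omega
  -- strength of A under perturbation
  have key : ∀ δ, σf (Function.update τ B δ) A
      = dfquad (τ A) (1 - (1 - dfquad δ va vs) * c) vsA := by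
    intro δ
    rw [hσ _ A]
    have hτA : Function.update τ B δ A = τ A := Function.update_of_ne hAB δ τ
    have hvsp : Q.vsup (σf (Function.update τ B δ)) A = vsA := by
      rw [hvsA_def]; unfold QBAF.vsup; congr 1
      refine Finset.prod_congr rfl (fun y hy => ?_)
      simp only [Finset.mem_filter, Finset.mem_univ, true_and] at hy
      have hyB : y ≠ B := by
        intro h
        exact Q.disjoint B A ⟨hatt, h ▸ hy⟩
      rw [agree y hyB (hA_other y (Or.inr hy)) δ]
    have hvap : Q.vatt (σf (Function.update τ B δ)) A = 1 - (1 - dfquad δ va vs) * c := by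
      unfold QBAF.vatt
      have hBmem : B ∈ Finset.univ.filter (fun x => Q.att x A) := by simp [hatt]
      rw [← Finset.mul_prod_erase _ _ hBmem, hσ'B δ]
      have hrest : ∏ x ∈ (Finset.univ.filter (fun x => Q.att x A)).erase B,
          (1 - σf (Function.update τ B δ) x) = c := by
        rw [hc_def]
        refine Finset.prod_congr rfl (fun y hy => ?_)
        simp only [Finset.mem_erase, Finset.mem_filter, Finset.mem_univ, true_and] at hy
        rw [agree y hy.1 (hA_other y (Or.inl hy.2)) δ]
      rw [hrest]
    rw [hτA, hvap, hvsp]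
  -- monotonicity facts
  have hτA : τ A ∈ Set.Icc (0:ℝ) 1 := hτ A
  have hva : va ∈ Set.Icc (0:ℝ) 1 := vatt_mem Q B hmem
  have hvs : vs ∈ Set.Icc (0:ℝ) 1 := vsup_mem Q B hmem
  have hc : 0 ≤ c := Finset.prod_nonneg (fun y _ => by linarith [(hmem y).2])
  have hanti : Antitone (fun δ => σf (Function.update τ B δ) A) := by
    intro a b hab
    simp only [key a, key b]
    have hmono : dfquad a va vs ≤ dfquad b va vs := dfquad_mono_t hva hvs hab
    have hX : 1 - (1 - dfquad a va vs) * c ≤ 1 - (1 - dfquad b va vs) * c := by nlinarith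
    exact dfquad_anti_va (vs := vsA) hτA.1 hτA.2 hX
  exact antitone_deriv_nonpos hanti (τ B)
end

section
/- Direct qualitative attribution influence (support case): if argument B directly supports topic argument A in an acyclic QBAF under DF-QuAD semantics, then the argument attribution explanation ∇|_{B→A} ≥ 0. -/
open scoped BigOperators
attribute [local instance] Classical.propDecidable

/- ============ auxiliary lemmas ============ -/

section Aux

variable {V : Type} [Fintype V]

/-- dfquad lies in [0,1] when its arguments do. -/
lemma dfquad_mem_Icc {t va vs : ℝ} (ht : t ∈ Set.Icc (0:ℝ) 1)
    (hva : va ∈ Set.Icc (0:ℝ) 1) (hvs : vs ∈ Set.Icc (0:ℝ) 1) :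
    dfquad t va vs ∈ Set.Icc (0:ℝ) 1 := by
  obtain ⟨ht0, ht1⟩ := ht
  obtain ⟨hva0, hva1⟩ := hva
  obtain ⟨hvs0, hvs1⟩ := hvs
  unfold dfquad
  split_ifs with h
  · constructor <;> nlinarith
  · constructor <;> nlinarith

/-- dfquad is monotone in the base score when `0 ≤ va ≤ 1` and `0 ≤ vs ≤ 1`. -/
lemma dfquad_mono_t {va vs : ℝ} (hva : va ∈ Set.Icc (0:ℝ) 1)
    (hvs : vs ∈ Set.Icc (0:ℝ) 1) :
    Monotone (fun t => dfquad t va vs) := by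
  obtain ⟨hva0, hva1⟩ := hva
  obtain ⟨hvs0, hvs1⟩ := hvs
  intro t1 t2 h12
  simp only [dfquad]
  split_ifs with h
  · nlinarith [mul_nonneg (sub_nonneg.2 h12) (show (0:ℝ) ≤ 1 - (va - vs) by linarith)]
  · nlinarith [mul_nonneg (sub_nonneg.2 h12) (show (0:ℝ) ≤ 1 - (vs - va) by linarith)]

/-- dfquad is monotone in the supporter strength when `t ∈ [0,1]`. -/
lemma dfquad_mono_vs {t va : ℝ} (ht : t ∈ Set.Icc (0:ℝ) 1) :
    Monotone (fun vs => dfquad t va vs) := by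
  obtain ⟨ht0, ht1⟩ := ht
  intro v1 v2 h12
  simp only [dfquad]
  split_ifs with h1 h2 h2
  · nlinarith [mul_nonneg ht0 (sub_nonneg.2 h12)]
  · nlinarith [mul_nonneg ht0 (show (0:ℝ) ≤ va - v1 by linarith),
      mul_nonneg (show (0:ℝ) ≤ 1 - t by linarith) (show (0:ℝ) ≤ v2 - va by linarith)]
  · exact absurd (h12.trans h2) h1
  · nlinarith [mul_nonneg (show (0:ℝ) ≤ 1 - t by linarith) (sub_nonneg.2 h12)]

lemma prod_one_sub_mem_Icc {s : Finset V} {σ : V → ℝ}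
    (h : ∀ x ∈ s, σ x ∈ Set.Icc (0:ℝ) 1) :
    (∏ x ∈ s, (1 - σ x)) ∈ Set.Icc (0:ℝ) 1 := by
  constructor
  · exact Finset.prod_nonneg fun x hx => by linarith [(h x hx).2]
  · exact Finset.prod_le_one (fun x hx => by linarith [(h x hx).2])
      (fun x hx => by linarith [(h x hx).1])

namespace QBAF

/-- No TransGen-cycle in an acyclic QBAF. -/
lemma no_cycle (Q : QBAF V) {a : V} (h : Relation.TransGen Q.edge a a) : False := by
  have hwf : WellFounded (Relation.TransGen Q.edge) := by
    have := Q.acyclic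
    exact this.transGen
  exact hwf.asymmetric a a h h

/-- Strengths only depend on base scores of ancestors. -/
lemma strength_congr (Q : QBAF V) {τ₁ τ₂ σ₁ σ₂ : V → ℝ}
    (h1 : Q.IsStrength τ₁ σ₁) (h2 : Q.IsStrength τ₂ σ₂) :
    ∀ X, (∀ y, Relation.ReflTransGen Q.edge y X → τ₁ y = τ₂ y) → σ₁ X = σ₂ X := by
  intro X
  induction X using Q.acyclic.induction with
  | _ X ih =>
    intro hagree
    have hσeq : ∀ y, Q.edge y X → σ₁ y = σ₂ y := by
      intro y hy
      exact ih y hy fun z hz => hagree z (hz.trans (Relation.ReflTransGen.single hy))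
    have hva : Q.vatt σ₁ X = Q.vatt σ₂ X := by
      unfold vatt
      congr 1
      refine Finset.prod_congr rfl fun x hx => ?_
      rw [hσeq x (Or.inl (Finset.mem_filter.mp hx).2)]
    have hvs : Q.vsup σ₁ X = Q.vsup σ₂ X := by
      unfold vsup
      congr 1
      refine Finset.prod_congr rfl fun x hx => ?_
      rw [hσeq x (Or.inr (Finset.mem_filter.mp hx).2)]
    rw [h1 X, h2 X, hva, hvs, hagree X Relation.ReflTransGen.refl]

/-- Strengths lie in [0,1] when base scores do. -/
lemma strength_mem_Icc (Q : QBAF V) {τ σ : V → ℝ} (h : Q.IsStrength τ σ)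
    (hτ : ∀ x, τ x ∈ Set.Icc (0:ℝ) 1) : ∀ X, σ X ∈ Set.Icc (0:ℝ) 1 := by
  intro X
  induction X using Q.acyclic.induction with
  | _ X ih =>
    have hva : Q.vatt σ X ∈ Set.Icc (0:ℝ) 1 := by
      unfold vatt
      have := prod_one_sub_mem_Icc (s := Finset.univ.filter (fun x => Q.att x X)) (σ := σ)
        (fun x hx => ih x (Or.inl (Finset.mem_filter.mp hx).2))
      constructor <;> [linarith [this.2]; linarith [this.1]]
    have hvs : Q.vsup σ X ∈ Set.Icc (0:ℝ) 1 := by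
      unfold vsup
      have := prod_one_sub_mem_Icc (s := Finset.univ.filter (fun x => Q.sup x X)) (σ := σ)
        (fun x hx => ih x (Or.inr (Finset.mem_filter.mp hx).2))
      constructor <;> [linarith [this.2]; linarith [this.1]]
    rw [h X]
    exact dfquad_mem_Icc (hτ X) hva hvs

end QBAF

/-- A monotone real function has nonnegative `deriv` everywhere. -/
lemma Monotone.deriv_nonneg' {f : ℝ → ℝ} (hf : Monotone f) (x : ℝ) : 0 ≤ deriv f x := by
  by_cases h : DifferentiableAt ℝ f x
  · have hd := h.hasDerivAt
    rw [hasDerivAt_iff_tendsto_slope] at hd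
    have h2 : Filter.Tendsto (slope f x) (nhdsWithin x (Set.Ioi x)) (nhds (deriv f x)) :=
      hd.mono_left (nhdsWithin_mono x (fun y hy => ne_of_gt hy))
    refine _root_.ge_of_tendsto h2 ?_
    filter_upwards [self_mem_nhdsWithin] with y hy
    rw [slope_def_field]
    have hxy : (0:ℝ) < y - x := by simpa [sub_pos] using hy
    exact div_nonneg (by linarith [hf (le_of_lt hy)]) hxy.le
  · simp [deriv_zero_of_not_differentiableAt h]

end Aux

/-- direct qualitative attribution influence, support case.
If `B` directly supports the topic argument `A` (the edge `(B,A) ∈ ℛ⁺` being the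
unique path from `B` to `A`), then `∇|_{B ↦ A} ≥ 0`. -/
theorem direct_qualitative_support {V : Type} [Fintype V] (Q : QBAF V)
    (σf : (V → ℝ) → V → ℝ) (hσ : ∀ τ, Q.IsStrength τ (σf τ))
    (τ : V → ℝ) (hτ : ∀ x, τ x ∈ Set.Icc (0:ℝ) 1)
    (A B : V) (hsup : Q.sup B A)
    (huniq : ∀ l, Q.IsPathFrom B A l → l = [B, A]) :
    0 ≤ AAE Q σf τ B A := by
  classical
  -- A ≠ B
  have hAB : A ≠ B := by
    rintro rfl
    exact Q.no_cycle (Relation.TransGen.single (Or.inr hsup))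
  -- predecessors of B are not reachable from B
  have hpredB : ∀ y, Q.edge y B → ¬ Relation.ReflTransGen Q.edge B y := by
    intro y hy hBy
    exact Q.no_cycle (Relation.TransGen.tail' hBy hy)
  -- predecessors of A other than B are not reachable from B
  have hpredA : ∀ x, Q.edge x A → x ≠ B → ¬ Relation.ReflTransGen Q.edge B x := by
    intro x hx hxB hBx
    obtain ⟨l, hl, hlast⟩ := List.exists_isChain_cons_of_relationReflTransGen hBx
    have hpath : Q.IsPathFrom B A (B :: l ++ [A]) := by
      refine ⟨by simp, ?_, by simp, ?_⟩
      swap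
      · show (B :: (l ++ [A])).getLast? = some A
        rw [show B :: (l ++ [A]) = (B :: l) ++ [A] by simp, List.getLast?_concat]
      have : List.Chain' Q.edge (B :: l) := hl
      refine this.append (List.isChain_singleton A) ?_
      intro a ha b hb
      simp at hb
      subst hb
      have : a = x := by
        have := List.getLast?_eq_getLast (l := B :: l) (List.cons_ne_nil _ _)
        rw [ha, hlast] at this
        exact (Option.some.inj this)
      rw [this]; exact hx
    have heq := huniq _ hpath
    have hl0 : l = [] := by
      have h2 := congrArg List.length heq
      simp only [List.length_cons, List.length_append, List.length_singleton] at h2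
      exact List.length_eq_zero_iff.mp (by omega)
    subst hl0
    simp at hlast
    exact hxB hlast.symm
  -- key: σf (update τ B δ) X = σf τ X for X not reachable from B
  have hloc : ∀ (δ : ℝ) (X : V), ¬ Relation.ReflTransGen Q.edge B X →
      σf (Function.update τ B δ) X = σf τ X := by
    intro δ X hX
    refine Q.strength_congr (hσ _) (hσ _) X fun y hy => ?_
    have hyB : y ≠ B := fun h => hX (h ▸ hy)
    simp [Function.update_of_ne hyB]
  set g : ℝ → ℝ := fun δ => σf (Function.update τ B δ) A with hg
  -- an explicit formula for g
  set SA : Finset V := Finset.univ.filter (fun x => Q.sup x A) with hSA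
  have hBmem : B ∈ SA := by simp [hSA, hsup]
  set P : ℝ := ∏ x ∈ SA.erase B, (1 - σf τ x) with hP
  set va : ℝ := Q.vatt (σf τ) A with hva
  set vaB : ℝ := Q.vatt (σf τ) B with hvaB
  set vsB : ℝ := Q.vsup (σf τ) B with hvsB
  have hform : ∀ δ, g δ = dfquad (τ A) va (1 - (1 - dfquad δ vaB vsB) * P) := by
    intro δ
    set τ' := Function.update τ B δ with hτ'
    have hστ' := hσ τ'
    -- strengths of predecessors of A other than B agree
    have hpredAeq : ∀ x, Q.edge x A → x ≠ B → σf τ' x = σf τ x :=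
      fun x hx hxB => hloc δ x (hpredA x hx hxB)
    -- vatt of A agrees
    have hvaeq : Q.vatt (σf τ') A = va := by
      rw [hva]
      unfold QBAF.vatt
      congr 1
      refine Finset.prod_congr rfl fun x hx => ?_
      have hxatt : Q.att x A := (Finset.mem_filter.mp hx).2
      have hxB : x ≠ B := fun h => Q.disjoint B A ⟨h ▸ hxatt, hsup⟩
      rw [hpredAeq x (Or.inl hxatt) hxB]
    -- σf τ' B = dfquad δ vaB vsB
    have hBeq : σf τ' B = dfquad δ vaB vsB := by
      rw [hστ' B]
      have h1 : Q.vatt (σf τ') B = vaB := by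
        rw [hvaB]
        unfold QBAF.vatt
        congr 1
        refine Finset.prod_congr rfl fun x hx => ?_
        rw [hloc δ x (hpredB x (Or.inl (Finset.mem_filter.mp hx).2))]
      have h2 : Q.vsup (σf τ') B = vsB := by
        rw [hvsB]
        unfold QBAF.vsup
        congr 1
        refine Finset.prod_congr rfl fun x hx => ?_
        rw [hloc δ x (hpredB x (Or.inr (Finset.mem_filter.mp hx).2))]
      rw [h1, h2, hτ', Function.update_self]
    -- vsup of A
    have hPe : (∏ x ∈ SA.erase B, (1 - σf τ' x)) = P := by
      rw [hP]
      refine Finset.prod_congr rfl fun x hx => ?_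
      have hxS : x ∈ SA := Finset.mem_of_mem_erase hx
      have hxB : x ≠ B := Finset.ne_of_mem_erase hx
      rw [hpredAeq x (Or.inr (Finset.mem_filter.mp hxS).2) hxB]
    have hvseq : Q.vsup (σf τ') A = 1 - (1 - dfquad δ vaB vsB) * P := by
      unfold QBAF.vsup
      rw [← hSA, ← Finset.mul_prod_erase SA _ hBmem, hBeq, hPe]
    have hτ'A : τ' A = τ A := Function.update_of_ne hAB _ _
    rw [hg]
    simp only
    rw [hστ' A, hvaeq, hvseq, hτ'A]
  -- membership facts for monotonicity
  have hmem := Q.strength_mem_Icc (hσ τ) hτ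
  have hvaB01 : vaB ∈ Set.Icc (0:ℝ) 1 := by
    rw [hvaB]; unfold QBAF.vatt
    have := prod_one_sub_mem_Icc (s := Finset.univ.filter (fun x => Q.att x B))
      (σ := σf τ) (fun x _ => hmem x)
    constructor <;> [linarith [this.2]; linarith [this.1]]
  have hvsB01 : vsB ∈ Set.Icc (0:ℝ) 1 := by
    rw [hvsB]; unfold QBAF.vsup
    have := prod_one_sub_mem_Icc (s := Finset.univ.filter (fun x => Q.sup x B))
      (σ := σf τ) (fun x _ => hmem x)
    constructor <;> [linarith [this.2]; linarith [this.1]]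
  have hP0 : 0 ≤ P := by
    rw [hP]
    exact Finset.prod_nonneg fun x _ => by linarith [(hmem x).2]
  -- g is monotone
  have hmono : Monotone g := by
    intro δ1 δ2 h12
    rw [hform δ1, hform δ2]
    refine dfquad_mono_vs (hτ A) ?_
    have hs : dfquad δ1 vaB vsB ≤ dfquad δ2 vaB vsB := dfquad_mono_t hvaB01 hvsB01 h12
    nlinarith
  exact hmono.deriv_nonneg' (τ B)
end

section
/- Indirect qualitative attribution influence: let X₁,…,Xₙ (n ≥ 3) form the unique path from X₁ to Xₙ in an acyclic QBAF, with edge set S = {(X₁,X₂),…,(X_{n−1},Xₙ)} ⊆ ℛ⁻ ∪ ℛ⁺, and let Θ = |S ∩ ℛ⁻| be the number of attack edges on the path. If Θ is odd then ∇|_{X₁→Xₙ} ≤ 0; if Θ is even then ∇|_{X₁→Xₙ} ≥ 0. -/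
open scoped BigOperators
attribute [local instance] Classical.propDecidable

private theorem mono_deriv_nonneg (f : ℝ → ℝ) (hf : Monotone f) (x : ℝ) : 0 ≤ deriv f x := by
  by_cases hd : DifferentiableAt ℝ f x
  · have h := hd.hasDerivAt
    rw [hasDerivAt_iff_tendsto_slope] at h
    refine ge_of_tendsto h ?_
    filter_upwards [self_mem_nhdsWithin] with y hy
    rcases lt_or_gt_of_ne (show y ≠ x from hy) with h1 | h1
    · rw [slope_def_field]
      exact div_nonneg_of_nonpos (by have := hf h1.le; linarith) (by linarith)
    · rw [slope_def_field]
      exact div_nonneg (by have := hf h1.le; linarith) (by linarith)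
  · simp [deriv_zero_of_not_differentiableAt hd]

private theorem anti_deriv_nonpos (f : ℝ → ℝ) (hf : Antitone f) (x : ℝ) : deriv f x ≤ 0 := by
  have := mono_deriv_nonneg (fun y => -f y) (fun a b h => neg_le_neg (hf h)) x
  rw [deriv.fun_neg] at this; linarith

private lemma dfquad_mem' {t va vs : ℝ} (ht1 : 0 ≤ t) (ht2 : t ≤ 1) (h3 : 0 ≤ va) (h4 : va ≤ 1)
    (h5 : 0 ≤ vs) (h6 : vs ≤ 1) : dfquad t va vs ∈ Set.Icc (0:ℝ) 1 := by
  unfold dfquad; split <;> constructor <;> nlinarith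

private lemma dfquad_mono_t_s7 {t₁ t₂ va vs : ℝ} (h3 : 0 ≤ va) (h4 : va ≤ 1) (h5 : 0 ≤ vs)
    (h6 : vs ≤ 1) (h : t₁ ≤ t₂) : dfquad t₁ va vs ≤ dfquad t₂ va vs := by
  unfold dfquad; split <;> nlinarith

private lemma dfquad_anti_va {t va₁ va₂ vs : ℝ} (ht0 : 0 ≤ t) (ht1 : t ≤ 1)
    (h : va₁ ≤ va₂) : dfquad t va₂ vs ≤ dfquad t va₁ vs := by
  unfold dfquad; split_ifs with h1 h2 h2 <;> nlinarith

private lemma dfquad_mono_vs_s7 {t va vs₁ vs₂ : ℝ} (ht0 : 0 ≤ t) (ht1 : t ≤ 1)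
    (h : vs₁ ≤ vs₂) : dfquad t va vs₁ ≤ dfquad t va vs₂ := by
  unfold dfquad; split_ifs with h1 h2 h2 <;> nlinarith

namespace QBAF
variable {V : Type} [Fintype V] (Q : QBAF V)

lemma edge_wf : WellFounded Q.edge := Q.acyclic

lemma not_transGen_self (x : V) : ¬ Relation.TransGen Q.edge x x := by
  have h : WellFounded (Relation.TransGen Q.edge) := (Q.edge_wf).transGen
  exact fun hx => h.isIrrefl.irrefl x hx

variable {σf : (V → ℝ) → V → ℝ} (hσ : ∀ τ, Q.IsStrength τ (σf τ))

lemma vatt_congr {σ₁ σ₂ : V → ℝ} {A : V} (h : ∀ x, Q.att x A → σ₁ x = σ₂ x) :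
    Q.vatt σ₁ A = Q.vatt σ₂ A := by
  unfold QBAF.vatt; congr 1
  exact Finset.prod_congr rfl fun x hx => by
    rw [h x (by simpa using (Finset.mem_filter.1 hx).2)]

lemma vsup_congr {σ₁ σ₂ : V → ℝ} {A : V} (h : ∀ x, Q.sup x A → σ₁ x = σ₂ x) :
    Q.vsup σ₁ A = Q.vsup σ₂ A := by
  unfold QBAF.vsup; congr 1
  exact Finset.prod_congr rfl fun x hx => by
    rw [h x (by simpa using (Finset.mem_filter.1 hx).2)]

include hσ in
lemma sigma_local : ∀ (x : V) (τ₁ τ₂ : V → ℝ),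
    (∀ y, Relation.ReflTransGen Q.edge y x → τ₁ y = τ₂ y) → σf τ₁ x = σf τ₂ x := by
  intro x
  induction x using Q.edge_wf.induction with
  | _ x ih =>
    intro τ₁ τ₂ hyp
    rw [hσ τ₁ x, hσ τ₂ x, hyp x Relation.ReflTransGen.refl]
    rw [Q.vatt_congr (σ₁ := σf τ₁) (σ₂ := σf τ₂) (fun z hz => ih z (Or.inl hz) τ₁ τ₂
      (fun y hy => hyp y (hy.tail (Or.inl hz)))),
      Q.vsup_congr (σ₁ := σf τ₁) (σ₂ := σf τ₂) (fun z hz => ih z (Or.inr hz) τ₁ τ₂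
      (fun y hy => hyp y (hy.tail (Or.inr hz))))]

lemma dfquad_mem' {t va vs : ℝ} (ht1 : 0 ≤ t) (ht2 : t ≤ 1) (h3 : 0 ≤ va) (h4 : va ≤ 1)
    (h5 : 0 ≤ vs) (h6 : vs ≤ 1) : dfquad t va vs ∈ Set.Icc (0:ℝ) 1 := by
  unfold dfquad; split <;> constructor <;> nlinarith

include hσ in
lemma sigma_mem (τ' : V → ℝ) (h : ∀ x, τ' x ∈ Set.Icc (0:ℝ) 1) :
    ∀ x, σf τ' x ∈ Set.Icc (0:ℝ) 1 := by
  intro x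
  induction x using Q.edge_wf.induction with
  | _ x ih =>
    rw [hσ τ' x]
    have hprodmem : ∀ (s : Finset V), (∀ z ∈ s, Q.edge z x) →
        (∏ z ∈ s, (1 - σf τ' z)) ∈ Set.Icc (0:ℝ) 1 := by
      intro s hs
      constructor
      · exact Finset.prod_nonneg fun z hz => by
          have := (ih z (hs z hz)).2; linarith
      · exact Finset.prod_le_one (fun z hz => by have := (ih z (hs z hz)).2; linarith)
          (fun z hz => by have := (ih z (hs z hz)).1; linarith)
    have ha := hprodmem (Finset.univ.filter (fun z => Q.att z x))
      (fun z hz => Or.inl (Finset.mem_filter.1 hz).2)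
    have hs := hprodmem (Finset.univ.filter (fun z => Q.sup z x))
      (fun z hz => Or.inr (Finset.mem_filter.1 hz).2)
    unfold QBAF.vatt QBAF.vsup
    exact dfquad_mem' (h x).1 (h x).2 (by linarith [ha.2]) (by linarith [ha.1])
      (by linarith [hs.2]) (by linarith [hs.1])

lemma chain'_map_range {R : V → V → Prop} {X : ℕ → V} {n i : ℕ}
    (h : ((List.range n).map X).Chain' R) (hi : i + 1 < n) : R (X i) (X (i+1)) := by
  rw [List.Chain', List.isChain_iff_getElem] at h
  have := h i (by simp; omega)
  simpa using this

lemma chain'_map_range' {R : V → V → Prop} {X : ℕ → V} {n : ℕ}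
    (h : ∀ i, i + 1 < n → R (X i) (X (i+1))) : ((List.range n).map X).Chain' R := by
  rw [List.Chain', List.isChain_iff_getElem]
  intro i hi
  simp only [List.get_eq_getElem, List.getElem_map, List.getElem_range]
  exact h i (by simp at hi; omega)

lemma exists_list_of_rtg {R : V → V → Prop} {a b : V} (h : Relation.ReflTransGen R a b) :
    ∃ p : List V, p ≠ [] ∧ p.Chain' R ∧ p.head? = some a ∧ p.getLast? = some b := by
  induction h with
  | refl => exact ⟨[a], by simp, List.isChain_singleton a, rfl, rfl⟩
  | @tail b c hab hbc ih =>
    obtain ⟨p, hne, hch, hh, hl⟩ := ih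
    refine ⟨p ++ [c], by simp, ?_, ?_, ?_⟩
    · rw [List.Chain', List.isChain_append]
      refine ⟨hch, List.isChain_singleton _, ?_⟩
      intro x hx y' hy'
      simp only [List.head?_cons, Option.mem_some_iff] at hy'
      rw [hl] at hx
      simp only [Option.mem_some_iff] at hx
      subst hx; subst hy'; exact hbc
    · cases p with
      | nil => exact absurd rfl hne
      | cons z t => simpa using hh
    · simp



lemma vatt_mem {σ : V → ℝ} (h : ∀ x, σ x ∈ Set.Icc (0:ℝ) 1) (A : V) :
    Q.vatt σ A ∈ Set.Icc (0:ℝ) 1 := by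
  unfold QBAF.vatt
  have h1 : (0:ℝ) ≤ ∏ x ∈ Finset.univ.filter (fun x => Q.att x A), (1 - σ x) :=
    Finset.prod_nonneg fun z _ => by have := (h z).2; linarith
  have h2 : ∏ x ∈ Finset.univ.filter (fun x => Q.att x A), (1 - σ x) ≤ 1 :=
    Finset.prod_le_one (fun z _ => by have := (h z).2; linarith)
      (fun z _ => by have := (h z).1; linarith)
  constructor <;> [linarith; linarith]

lemma vsup_mem {σ : V → ℝ} (h : ∀ x, σ x ∈ Set.Icc (0:ℝ) 1) (A : V) :
    Q.vsup σ A ∈ Set.Icc (0:ℝ) 1 := by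
  unfold QBAF.vsup
  have h1 : (0:ℝ) ≤ ∏ x ∈ Finset.univ.filter (fun x => Q.sup x A), (1 - σ x) :=
    Finset.prod_nonneg fun z _ => by have := (h z).2; linarith
  have h2 : ∏ x ∈ Finset.univ.filter (fun x => Q.sup x A), (1 - σ x) ≤ 1 :=
    Finset.prod_le_one (fun z _ => by have := (h z).2; linarith)
      (fun z _ => by have := (h z).1; linarith)
  constructor <;> [linarith; linarith]

lemma not_reach {n : ℕ} {X : ℕ → V} (hn : 3 ≤ n)
    (hpath : Q.IsPathFrom (X 0) (X (n-1)) ((List.range n).map X))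
    (huniq : ∀ l, Q.IsPathFrom (X 0) (X (n-1)) l → l = (List.range n).map X)
    (j : ℕ) (hj1 : 1 ≤ j) (hj : j < n) {y : V} (hy : Q.edge y (X j))
    (hne : y ≠ X (j-1)) : ¬ Relation.ReflTransGen Q.edge (X 0) y := by
  intro hr
  obtain ⟨p, hpne, hpch, hph, hpl⟩ := exists_list_of_rtg hr
  have hedge : ∀ i, i + 1 < n → Q.edge (X i) (X (i+1)) :=
    fun i hi => chain'_map_range hpath.2.1 hi
  set suf : List V := (List.range (n - j)).map (fun k => X (j + k)) with hsuf
  have hsuflen : suf.length = n - j := by simp [hsuf]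
  have hsufh : suf.head? = some (X j) := by
    rw [List.head?_eq_getElem?]
    have h0 : 0 < n - j := by omega
    simp [hsuf, List.getElem?_range, h0]
  have hsufl : suf.getLast? = some (X (n-1)) := by
    rw [List.getLast?_eq_getElem?, hsuflen]
    have h0 : n - j - 1 < n - j := by omega
    simp only [hsuf, List.length_map, List.length_range, List.getElem?_map, List.getElem?_range,
      h0, if_pos, Option.map_some]
    have h1 : j + (n - j - 1) = n - 1 := by omega
    rw [h1]
  have hsufch : suf.Chain' Q.edge := by
    apply chain'_map_range'
    intro i hi
    exact hedge (j + i) (by omega)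
  have hplen : 1 ≤ p.length := List.length_pos_iff.2 hpne
  have hcomb : Q.IsPathFrom (X 0) (X (n-1)) (p ++ suf) := by
    refine ⟨?_, ?_, ?_, ?_⟩
    · rw [List.length_append, hsuflen]; omega
    · rw [List.Chain', List.isChain_append]
      refine ⟨hpch, hsufch, ?_⟩
      intro a ha b hb
      rw [hpl] at ha
      rw [hsufh] at hb
      simp only [Option.mem_some_iff] at ha hb
      subst ha; subst hb; exact hy
    · cases p with
      | nil => exact absurd rfl hpne
      | cons z t => simpa using hph
    · rw [List.getLast?_append, hsufl]
      rfl
  have hEq := huniq _ hcomb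
  have hlen : p.length = j := by
    have := congrArg List.length hEq
    simp only [List.length_append, hsuflen, List.length_map, List.length_range] at this
    omega
  have hp : p = ((List.range n).map X).take j := by
    have := List.take_left (l₁ := p) (l₂ := suf)
    rw [hlen] at this
    rw [← this, hEq]
  have hy' : y = X (j-1) := by
    rw [hp] at hpl
    rw [List.getLast?_eq_getElem?] at hpl
    have hlen2 : (((List.range n).map X).take j).length = j := by simp; omega
    rw [hlen2] at hpl
    have h2 : j - 1 < j := by omega
    have h3 : j - 1 < n := by omega
    simp [h2, h3] at hpl
    exact hpl.symm
  exact hne hy'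

end QBAF

/-- indirect qualitative attribution influence. If `X 0, …, X (n-1)`
(`n ≥ 3`) is the unique path from `X 0` to `X (n-1)` and `Θ` is the number of attack
edges on it, then `∇|_{X 0 ↦ X (n-1)} ≤ 0` when `Θ` is odd and `≥ 0` when `Θ` is even. -/
theorem indirect_qualitative {V : Type} [Fintype V] (Q : QBAF V)
    (σf : (V → ℝ) → V → ℝ) (hσ : ∀ τ, Q.IsStrength τ (σf τ))
    (τ : V → ℝ) (hτ : ∀ x, τ x ∈ Set.Icc (0:ℝ) 1)
    (n : ℕ) (hn : 3 ≤ n) (X : ℕ → V)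
    (hpath : Q.IsPathFrom (X 0) (X (n-1)) ((List.range n).map X))
    (huniq : ∀ l, Q.IsPathFrom (X 0) (X (n-1)) l → l = (List.range n).map X) :
    (Odd ((Finset.range (n-1)).filter (fun i => Q.att (X i) (X (i+1)))).card →
        AAE Q σf τ (X 0) (X (n-1)) ≤ 0) ∧
    (Even ((Finset.range (n-1)).filter (fun i => Q.att (X i) (X (i+1)))).card →
        0 ≤ AAE Q σf τ (X 0) (X (n-1))) := by
  classical
  have hedge : ∀ i, i+1 < n → Q.edge (X i) (X (i+1)) :=
    fun i hi => QBAF.chain'_map_range hpath.2.1 hi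
  have hTG : ∀ j, 1 ≤ j → j < n → Relation.TransGen Q.edge (X 0) (X j) := by
    intro j
    induction j with
    | zero => intro h; omega
    | succ k ih =>
      intro _ hk
      rcases Nat.eq_zero_or_pos k with rfl | hk0
      · exact Relation.TransGen.single (hedge 0 (by omega))
      · exact (ih hk0 (by omega)).tail (hedge k (by omega))
  have hne0 : ∀ j, 1 ≤ j → j < n → X j ≠ X 0 := by
    intro j h1 h2 he
    exact Q.not_transGen_self (X 0) (he ▸ hTG j h1 h2)
  have hconst : ∀ x, ¬ Relation.ReflTransGen Q.edge (X 0) x → ∀ δ,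
      σf (Function.update τ (X 0) δ) x = σf τ x := by
    intro x hx δ
    refine Q.sigma_local hσ x _ _ (fun y hy => ?_)
    rcases eq_or_ne y (X 0) with rfl | hne
    · exact absurd hy hx
    · exact Function.update_of_ne hne _ _
  have hnr0 : ∀ z, Q.edge z (X 0) → ¬ Relation.ReflTransGen Q.edge (X 0) z := by
    intro z hz hr
    exact Q.not_transGen_self (X 0) (Relation.TransGen.tail' hr hz)
  have hmem : ∀ x, σf τ x ∈ Set.Icc (0:ℝ) 1 := Q.sigma_mem hσ τ hτ
  have key : ∀ j, j < n →
      (Even ((Finset.range j).filter (fun i => Q.att (X i) (X (i+1)))).card →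
        Monotone (fun δ => σf (Function.update τ (X 0) δ) (X j))) ∧
      (Odd ((Finset.range j).filter (fun i => Q.att (X i) (X (i+1)))).card →
        Antitone (fun δ => σf (Function.update τ (X 0) δ) (X j))) := by
    intro j
    induction j with
    | zero =>
      intro _
      have hva : ∀ δ, Q.vatt (σf (Function.update τ (X 0) δ)) (X 0) = Q.vatt (σf τ) (X 0) :=
        fun δ => Q.vatt_congr (fun z hz => hconst z (hnr0 z (Or.inl hz)) δ)
      have hvs : ∀ δ, Q.vsup (σf (Function.update τ (X 0) δ)) (X 0) = Q.vsup (σf τ) (X 0) :=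
        fun δ => Q.vsup_congr (fun z hz => hconst z (hnr0 z (Or.inr hz)) δ)
      have hrw : ∀ δ, σf (Function.update τ (X 0) δ) (X 0)
          = dfquad δ (Q.vatt (σf τ) (X 0)) (Q.vsup (σf τ) (X 0)) := by
        intro δ
        rw [hσ _ (X 0), hva δ, hvs δ, Function.update_self]
      have hvam := Q.vatt_mem hmem (X 0)
      have hvsm := Q.vsup_mem hmem (X 0)
      constructor
      · intro _ a b hab
        dsimp only
        rw [hrw a, hrw b]
        exact dfquad_mono_t_s7 hvam.1 hvam.2 hvsm.1 hvsm.2 hab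
      · intro hodd
        simp at hodd
    | succ k ih =>
      intro hk1
      have hkn : k < n := by omega
      obtain ⟨ihE, ihO⟩ := ih hkn
      have hkne : X (k+1) ≠ X 0 := hne0 (k+1) (by omega) hk1
      have hupd : ∀ δ, Function.update τ (X 0) δ (X (k+1)) = τ (X (k+1)) :=
        fun δ => Function.update_of_ne hkne _ _
      have ht0 : (0:ℝ) ≤ τ (X (k+1)) := (hτ _).1
      have ht1 : τ (X (k+1)) ≤ 1 := (hτ _).2
      have hnrj : ∀ z, Q.edge z (X (k+1)) → z ≠ X k →
          ¬ Relation.ReflTransGen Q.edge (X 0) z := by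
        intro z hz hzne
        have : z ≠ X ((k+1)-1) := by simpa using hzne
        exact Q.not_reach hn hpath huniq (k+1) (by omega) hk1 hz this
      by_cases hatt : Q.att (X k) (X (k+1))
      · -- attack step
        have hAsucc : ((Finset.range (k+1)).filter (fun i => Q.att (X i) (X (i+1)))).card
            = ((Finset.range k).filter (fun i => Q.att (X i) (X (i+1)))).card + 1 := by
          rw [Finset.range_add_one, Finset.filter_insert, if_pos hatt,
            Finset.card_insert_of_notMem (by simp)]
        have hvs : ∀ δ, Q.vsup (σf (Function.update τ (X 0) δ)) (X (k+1))
            = Q.vsup (σf τ) (X (k+1)) := by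
          intro δ
          refine Q.vsup_congr (fun z hz => hconst z (hnrj z (Or.inr hz) ?_) δ)
          intro he
          exact Q.disjoint (X k) (X (k+1)) ⟨hatt, he ▸ hz⟩
        set s := Finset.univ.filter (fun z => Q.att z (X (k+1))) with hs
        have hXks : X k ∈ s := by simp [hs, hatt]
        set C := ∏ z ∈ s.erase (X k), (1 - σf τ z) with hC
        have hCnn : 0 ≤ C :=
          Finset.prod_nonneg fun z _ => by have := (hmem z).2; linarith
        have hva : ∀ δ, Q.vatt (σf (Function.update τ (X 0) δ)) (X (k+1))
            = 1 - (1 - σf (Function.update τ (X 0) δ) (X k)) * C := by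
          intro δ
          unfold QBAF.vatt
          rw [← hs, ← Finset.mul_prod_erase s _ hXks]
          congr 2
          refine Finset.prod_congr rfl (fun z hz => ?_)
          have hz1 := Finset.mem_erase.1 hz
          have hz2 : Q.att z (X (k+1)) := by
            have := hz1.2
            rw [hs] at this
            simpa using (Finset.mem_filter.1 this).2
          rw [hconst z (hnrj z (Or.inl hz2) hz1.1) δ]
        have hrw : ∀ δ, σf (Function.update τ (X 0) δ) (X (k+1))
            = dfquad (τ (X (k+1))) (1 - (1 - σf (Function.update τ (X 0) δ) (X k)) * C)
              (Q.vsup (σf τ) (X (k+1))) := by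
          intro δ
          rw [hσ _ (X (k+1)), hva δ, hvs δ, hupd δ]
        constructor
        · intro hEv
          have hOd : Odd ((Finset.range k).filter (fun i => Q.att (X i) (X (i+1)))).card := by
            rw [hAsucc] at hEv
            rcases Nat.even_or_odd ((Finset.range k).filter
              (fun i => Q.att (X i) (X (i+1)))).card with h | h
            · exact absurd hEv (by simpa [Nat.even_add_one] using h)
            · exact h
          have hanti := ihO hOd
          intro a b hab
          dsimp only
          rw [hrw a, hrw b]
          have hg := hanti hab
          dsimp only at hg
          refine dfquad_anti_va ht0 ht1 ?_
          nlinarith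
        · intro hOd
          have hEv : Even ((Finset.range k).filter (fun i => Q.att (X i) (X (i+1)))).card := by
            rw [hAsucc] at hOd
            rcases Nat.even_or_odd ((Finset.range k).filter
              (fun i => Q.att (X i) (X (i+1)))).card with h | h
            · exact h
            · exfalso
              have : Even (((Finset.range k).filter (fun i => Q.att (X i) (X (i+1)))).card + 1) := by
                simpa [Nat.even_add_one] using (Nat.not_even_iff_odd.2 h)
              exact (Nat.not_odd_iff_even.2 this) hOd
          have hmono := ihE hEv
          intro a b hab
          dsimp only
          rw [hrw a, hrw b]
          have hg := hmono hab
          dsimp only at hg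
          refine dfquad_anti_va ht0 ht1 ?_
          nlinarith
      · -- support step
        have hsup : Q.sup (X k) (X (k+1)) := (hedge k hk1).resolve_left hatt
        have hAsucc : ((Finset.range (k+1)).filter (fun i => Q.att (X i) (X (i+1)))).card
            = ((Finset.range k).filter (fun i => Q.att (X i) (X (i+1)))).card := by
          rw [Finset.range_add_one, Finset.filter_insert, if_neg hatt]
        have hva : ∀ δ, Q.vatt (σf (Function.update τ (X 0) δ)) (X (k+1))
            = Q.vatt (σf τ) (X (k+1)) := by
          intro δ
          refine Q.vatt_congr (fun z hz => hconst z (hnrj z (Or.inl hz) ?_) δ)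
          intro he
          exact hatt (he ▸ hz)
        set s := Finset.univ.filter (fun z => Q.sup z (X (k+1))) with hs
        have hXks : X k ∈ s := by simp [hs, hsup]
        set C := ∏ z ∈ s.erase (X k), (1 - σf τ z) with hC
        have hCnn : 0 ≤ C :=
          Finset.prod_nonneg fun z _ => by have := (hmem z).2; linarith
        have hvs : ∀ δ, Q.vsup (σf (Function.update τ (X 0) δ)) (X (k+1))
            = 1 - (1 - σf (Function.update τ (X 0) δ) (X k)) * C := by
          intro δ
          unfold QBAF.vsup
          rw [← hs, ← Finset.mul_prod_erase s _ hXks]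
          congr 2
          refine Finset.prod_congr rfl (fun z hz => ?_)
          have hz1 := Finset.mem_erase.1 hz
          have hz2 : Q.sup z (X (k+1)) := by
            have := hz1.2
            rw [hs] at this
            simpa using (Finset.mem_filter.1 this).2
          rw [hconst z (hnrj z (Or.inr hz2) hz1.1) δ]
        have hrw : ∀ δ, σf (Function.update τ (X 0) δ) (X (k+1))
            = dfquad (τ (X (k+1))) (Q.vatt (σf τ) (X (k+1)))
              (1 - (1 - σf (Function.update τ (X 0) δ) (X k)) * C) := by
          intro δ
          rw [hσ _ (X (k+1)), hva δ, hvs δ, hupd δ]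
        constructor
        · intro hEv
          have hmono := ihE (hAsucc ▸ hEv)
          intro a b hab
          dsimp only
          rw [hrw a, hrw b]
          have hg := hmono hab
          dsimp only at hg
          refine dfquad_mono_vs_s7 ht0 ht1 ?_
          nlinarith
        · intro hOd
          have hanti := ihO (hAsucc ▸ hOd)
          intro a b hab
          dsimp only
          rw [hrw a, hrw b]
          have hg := hanti hab
          dsimp only at hg
          refine dfquad_mono_vs_s7 ht0 ht1 ?_
          nlinarith
  obtain ⟨hE, hO⟩ := key (n-1) (by omega)
  constructor
  · intro hodd
    exact anti_deriv_nonpos _ (hO hodd) _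
  · intro heven
    exact mono_deriv_nonneg _ (hE heven) _
end

section
/- Missingness: if B is disconnected from A (there is no directed path from B to A in the QBAF graph), then σ(A) does not depend on τ(B), and hence the argument attribution explanation ∇|_{B→A} = 0. -/
open scoped BigOperators
attribute [local instance] Classical.propDecidable

lemma path_extend {V : Type} [Fintype V] (Q : QBAF V) {B x A : V} {l : List V}
    (hl : Q.IsPathFrom B x l) (hxA : Q.edge x A) : Q.IsPathFrom B A (l ++ [A]) := by
  obtain ⟨hlen, hch, hhd, hlast⟩ := hl
  have hne : l ≠ [] := by
    intro h; simp [h] at hlen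
  refine ⟨?_, ?_, ?_, ?_⟩
  · simp only [List.length_append, List.length_singleton]
    omega
  · rw [List.Chain', List.isChain_append]
    refine ⟨hch, List.isChain_singleton _, ?_⟩
    intro a ha b hb
    simp only [List.head?_cons, Option.mem_def, Option.some.injEq] at hb
    rw [hlast] at ha
    simp only [Option.mem_def, Option.some.injEq] at ha
    subst ha; subst hb; exact hxA
  · rwa [List.head?_append_of_ne_nil _ hne]
  · simp [List.getLast?_append]

theorem missing_key {V : Type} [Fintype V] (Q : QBAF V)
    (σf : (V → ℝ) → V → ℝ) (hσ : ∀ τ, Q.IsStrength τ (σf τ))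
    (τ : V → ℝ) (B : V) (δ : ℝ) :
    ∀ A, B ≠ A → (¬ ∃ l, Q.IsPathFrom B A l) →
      σf (Function.update τ B δ) A = σf τ A := by
  intro A
  induction A using Q.acyclic.induction with
  | _ A ih =>
    intro hBA hdis
    have hpred : ∀ x, Q.edge x A → σf (Function.update τ B δ) x = σf τ x := by
      intro x hx
      have hxB : B ≠ x := by
        rintro rfl
        exact hdis ⟨[B, A], by simp, by simpa [List.Chain', List.isChain_cons_cons] using hx, rfl, rfl⟩
      have hxdis : ¬ ∃ l, Q.IsPathFrom B x l := by
        rintro ⟨l, hl⟩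
        exact hdis ⟨l ++ [A], path_extend Q hl hx⟩
      exact ih x hx hxB hxdis
    have h1 := hσ (Function.update τ B δ) A
    have h2 := hσ τ A
    have hva : Q.vatt (σf (Function.update τ B δ)) A = Q.vatt (σf τ) A := by
      unfold QBAF.vatt
      congr 1
      apply Finset.prod_congr rfl
      intro x hxm
      rw [Finset.mem_filter] at hxm
      rw [hpred x (Or.inl hxm.2)]
    have hvs : Q.vsup (σf (Function.update τ B δ)) A = Q.vsup (σf τ) A := by
      unfold QBAF.vsup
      congr 1
      apply Finset.prod_congr rfl
      intro x hxm
      rw [Finset.mem_filter] at hxm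
      rw [hpred x (Or.inr hxm.2)]
    rw [h1, h2, hva, hvs, Function.update_of_ne (Ne.symm hBA)]

/-- missingness. If `B` is disconnected from `A` (no directed path from
`B` to `A`), then `σ(A)` does not depend on `τ(B)` and `∇|_{B ↦ A} = 0`. -/
theorem missingness {V : Type} [Fintype V] (Q : QBAF V)
    (σf : (V → ℝ) → V → ℝ) (hσ : ∀ τ, Q.IsStrength τ (σf τ))
    (τ : V → ℝ) (hτ : ∀ x, τ x ∈ Set.Icc (0:ℝ) 1)
    (A B : V) (hBA : B ≠ A) (hdis : ¬ ∃ l, Q.IsPathFrom B A l) :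
    (∀ δ : ℝ, σf (Function.update τ B δ) A = σf τ A) ∧ AAE Q σf τ B A = 0 := by
  have hc : ∀ δ : ℝ, σf (Function.update τ B δ) A = σf τ A :=
    fun δ => missing_key Q σf hσ τ B δ A hBA hdis
  refine ⟨hc, ?_⟩
  unfold AAE
  have : (fun δ => σf (Function.update τ B δ) A) = fun _ => σf τ A :=
    funext hc
  rw [this, deriv_const]
end

section
/- Completeness can fail under multifold connectivity: there exists an acyclic QBAF and arguments A, D with more than one path from D to A such that σ'_D(A) − σ(A) ≠ −τ(D) · ∇|_{D→A}. Concretely, in the QBAF with arguments {A,B,C,D}, supports (B,A), (C,A), (D,B), (D,C), and all base scores 0.5, one has σ(A) = 0.96875, ∇|_{D→A} = 0.125, σ'_D(A) = 0.875, so σ'_D(A) − σ(A) = −0.09375 ≠ −0.0625 = −τ(D)·∇|_{D→A}. -/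
open scoped BigOperators
attribute [local instance] Classical.propDecidable

/-! ### Auxiliary definitions for the counterexample -/

def mySup (x y : Fin 4) : Prop :=
  (x = 1 ∧ y = 0) ∨ (x = 2 ∧ y = 0) ∨ (x = 3 ∧ y = 1) ∨ (x = 3 ∧ y = 2)

def myQ : QBAF (Fin 4) where
  att := fun _ _ => False
  sup := mySup
  disjoint := by intro x y h; exact h.1
  acyclic := by
    have hsub : Subrelation (fun x y : Fin 4 => False ∨ mySup x y)
        (InvImage (· < ·) (fun x : Fin 4 => 3 - x.val)) := by
      rintro a b (h | h)
      · exact h.elim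
      · rcases h with ⟨ha, hb⟩ | ⟨ha, hb⟩ | ⟨ha, hb⟩ | ⟨ha, hb⟩ <;>
          subst ha <;> subst hb <;>
          simp [InvImage, show ((0:Fin 4):ℕ)=0 from rfl, show ((1:Fin 4):ℕ)=1 from rfl,
            show ((2:Fin 4):ℕ)=2 from rfl, show ((3:Fin 4):ℕ)=3 from rfl]
    exact Subrelation.wf hsub (InvImage.wf _ Nat.lt_wfRel.wf)

noncomputable def s3f (τ' : Fin 4 → ℝ) : ℝ := dfquad (τ' 3) 0 0
noncomputable def s1f (τ' : Fin 4 → ℝ) : ℝ := dfquad (τ' 1) 0 (1 - (1 - s3f τ'))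
noncomputable def s2f (τ' : Fin 4 → ℝ) : ℝ := dfquad (τ' 2) 0 (1 - (1 - s3f τ'))
noncomputable def s0f (τ' : Fin 4 → ℝ) : ℝ :=
  dfquad (τ' 0) 0 (1 - (1 - s1f τ') * (1 - s2f τ'))

noncomputable def mySigma (τ' : Fin 4 → ℝ) : Fin 4 → ℝ := fun A =>
  if A = 0 then s0f τ' else if A = 1 then s1f τ' else if A = 2 then s2f τ' else s3f τ'

lemma mySigma_0 (τ' : Fin 4 → ℝ) : mySigma τ' 0 = s0f τ' := if_pos rfl
lemma mySigma_1 (τ' : Fin 4 → ℝ) : mySigma τ' 1 = s1f τ' := by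
  rw [mySigma, if_neg (by decide), if_pos rfl]
lemma mySigma_2 (τ' : Fin 4 → ℝ) : mySigma τ' 2 = s2f τ' := by
  rw [mySigma, if_neg (by decide), if_neg (by decide), if_pos rfl]
lemma mySigma_3 (τ' : Fin 4 → ℝ) : mySigma τ' 3 = s3f τ' := by
  rw [mySigma, if_neg (by decide), if_neg (by decide), if_neg (by decide)]

lemma dfquad_zero (t : ℝ) : dfquad t 0 0 = t := by simp [dfquad]

lemma dfquad_half (v : ℝ) : dfquad 0.5 0 v = 0.5 + 0.5 * v := by
  unfold dfquad; split <;> ring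

lemma myQ_vatt (σ : Fin 4 → ℝ) (A : Fin 4) : myQ.vatt σ A = 0 := by
  unfold QBAF.vatt
  have h : Finset.univ.filter (fun x => myQ.att x A) = ∅ := by
    ext x; rw [Finset.mem_filter]; simp [myQ]
  rw [h]; simp

lemma filter_sup_0 : Finset.univ.filter (fun x => myQ.sup x (0 : Fin 4)) = {1, 2} := by
  ext x; fin_cases x <;> simp [myQ, mySup] <;> decide
lemma filter_sup_1 : Finset.univ.filter (fun x => myQ.sup x (1 : Fin 4)) = {3} := by
  ext x; fin_cases x <;> simp [myQ, mySup] <;> decide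
lemma filter_sup_2 : Finset.univ.filter (fun x => myQ.sup x (2 : Fin 4)) = {3} := by
  ext x; fin_cases x <;> simp [myQ, mySup] <;> decide
lemma filter_sup_3 : Finset.univ.filter (fun x => myQ.sup x (3 : Fin 4)) = ∅ := by
  ext x; fin_cases x <;> simp [myQ, mySup] <;> decide

lemma myQ_isStrength (τ' : Fin 4 → ℝ) : myQ.IsStrength τ' (mySigma τ') := by
  intro A
  have k0 : mySigma τ' 0 = dfquad (τ' 0) (myQ.vatt (mySigma τ') 0) (myQ.vsup (mySigma τ') 0) := by
    rw [mySigma_0, myQ_vatt, QBAF.vsup, filter_sup_0, Finset.prod_pair (by decide),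
      mySigma_1, mySigma_2, s0f]
  have k1 : mySigma τ' 1 = dfquad (τ' 1) (myQ.vatt (mySigma τ') 1) (myQ.vsup (mySigma τ') 1) := by
    rw [mySigma_1, myQ_vatt, QBAF.vsup, filter_sup_1, Finset.prod_singleton, mySigma_3, s1f]
  have k2 : mySigma τ' 2 = dfquad (τ' 2) (myQ.vatt (mySigma τ') 2) (myQ.vsup (mySigma τ') 2) := by
    rw [mySigma_2, myQ_vatt, QBAF.vsup, filter_sup_2, Finset.prod_singleton, mySigma_3, s2f]
  have k3 : mySigma τ' 3 = dfquad (τ' 3) (myQ.vatt (mySigma τ') 3) (myQ.vsup (mySigma τ') 3) := by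
    rw [mySigma_3, myQ_vatt, QBAF.vsup, filter_sup_3, Finset.prod_empty, s3f]; norm_num
  fin_cases A
  exacts [k0, k1, k2, k3]

lemma s0f_eval (τ' : Fin 4 → ℝ) (δ : ℝ) (h0 : τ' 0 = 0.5) (h1 : τ' 1 = 0.5)
    (h2 : τ' 2 = 0.5) (h3 : τ' 3 = δ) :
    s0f τ' = 1 - 0.5 * (0.5 - 0.5 * δ) ^ 2 := by
  simp only [s0f, s1f, s2f, s3f, h0, h1, h2, h3, dfquad_zero, dfquad_half]; ring

lemma upd_ne {inst : DecidableEq (Fin 4)} (f : Fin 4 → ℝ) (v : ℝ) (x : Fin 4) (h : x ≠ 3) :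
    @Function.update (Fin 4) (fun _ => ℝ) inst f 3 v x = f x := by
  have hi : inst = instDecidableEqFin 4 := by funext a b; exact Subsingleton.elim _ _
  subst hi; exact Function.update_of_ne h _ _

lemma upd_same {inst : DecidableEq (Fin 4)} (f : Fin 4 → ℝ) (v : ℝ) :
    @Function.update (Fin 4) (fun _ => ℝ) inst f 3 v 3 = v := by
  have hi : inst = instDecidableEqFin 4 := by funext a b; exact Subsingleton.elim _ _
  subst hi; exact Function.update_self _ _ _

/-- completeness can fail under multifold connectivity. In the QBAF with
arguments `A = 0, B = 1, C = 2, D = 3`, supports `(B,A), (C,A), (D,B), (D,C)`, no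
attacks, and all base scores `0.5`, there is more than one path from `D` to `A`, and
`σ(A) = 0.96875`, `∇|_{D ↦ A} = 0.125`, `σ'_D(A) = 0.875`, so
`σ'_D(A) - σ(A) = -0.09375 ≠ -0.0625 = -τ(D) · ∇|_{D ↦ A}`. -/
theorem completeness_can_fail :
    ∃ (Q : QBAF (Fin 4)) (σf : (Fin 4 → ℝ) → Fin 4 → ℝ) (τ : Fin 4 → ℝ),
      (∀ τ', Q.IsStrength τ' (σf τ')) ∧
      (∀ x y, ¬ Q.att x y) ∧
      (∀ x y, Q.sup x y ↔ (x, y) ∈ ({(1,0), (2,0), (3,1), (3,2)} : Set (Fin 4 × Fin 4))) ∧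
      (∀ x, τ x = 0.5) ∧
      (∃ l₁ l₂, Q.IsPathFrom 3 0 l₁ ∧ Q.IsPathFrom 3 0 l₂ ∧ l₁ ≠ l₂) ∧
      σf τ 0 = 0.96875 ∧
      AAE Q σf τ 3 0 = 0.125 ∧
      σf (Function.update τ 3 0) 0 = 0.875 ∧
      σf (Function.update τ 3 0) 0 - σf τ 0 = -0.09375 ∧
      σf (Function.update τ 3 0) 0 - σf τ 0 ≠ -(τ 3) * AAE Q σf τ 3 0 := by
  have hσ : mySigma (fun _ : Fin 4 => (0.5 : ℝ)) 0 = 0.96875 := by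
    rw [mySigma_0, s0f_eval _ 0.5 rfl rfl rfl rfl]; norm_num
  have hσ' : mySigma (Function.update (fun _ : Fin 4 => (0.5 : ℝ)) 3 0) 0 = 0.875 := by
    rw [mySigma_0, s0f_eval _ 0 (upd_ne _ _ _ (by decide)) (upd_ne _ _ _ (by decide))
      (upd_ne _ _ _ (by decide)) (upd_same _ _)]
    norm_num
  have hA : AAE myQ mySigma (fun _ : Fin 4 => (0.5 : ℝ)) 3 0 = 0.125 := by
    rw [AAE]
    have h1 : HasDerivAt (fun δ : ℝ => 0.5 - 0.5 * δ) (-0.5) 0.5 := by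
      simpa using ((hasDerivAt_id (0.5 : ℝ)).const_mul (0.5 : ℝ)).const_sub (0.5 : ℝ)
    have h2 := (h1.pow 2).const_mul (0.5 : ℝ)
    have h3 := h2.const_sub (1 : ℝ)
    have h4 : HasDerivAt (fun δ : ℝ => 1 - 0.5 * (0.5 - 0.5 * δ) ^ 2) 0.125 0.5 := by
      exact h3.congr_deriv (by norm_num)
    have hd := h4.deriv
    refine Eq.trans (congrArg (fun f : ℝ → ℝ => deriv f (0.5:ℝ)) ?_) hd
    funext δ
    rw [mySigma_0]
    exact s0f_eval _ δ (upd_ne _ _ _ (by decide)) (upd_ne _ _ _ (by decide))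
      (upd_ne _ _ _ (by decide)) (upd_same _ _)
  refine ⟨myQ, mySigma, fun _ => 0.5, myQ_isStrength, ?_, ?_, fun _ => rfl, ?_, hσ, hA, hσ',
    by rw [hσ, hσ']; norm_num, by rw [hσ, hσ', hA]; norm_num⟩
  · intro x y h; exact h
  · intro x y
    simp only [myQ, mySup, Set.mem_insert_iff, Set.mem_singleton_iff, Prod.mk.injEq]
  · refine ⟨[3, 1, 0], [3, 2, 0], ⟨by norm_num, ?_, rfl, rfl⟩, ⟨by norm_num, ?_, rfl, rfl⟩,
      by simp⟩
    · exact List.IsChain.cons_cons (Or.inr (Or.inr (Or.inr (Or.inl ⟨rfl, rfl⟩))))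
        (List.IsChain.cons_cons (Or.inr (Or.inl ⟨rfl, rfl⟩)) (List.isChain_singleton _))
    · exact List.IsChain.cons_cons (Or.inr (Or.inr (Or.inr (Or.inr ⟨rfl, rfl⟩))))
        (List.IsChain.cons_cons (Or.inr (Or.inr (Or.inl ⟨rfl, rfl⟩))) (List.isChain_singleton _))
end
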